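/- arXiv:2301.12965 — 4 statements merged into one kernel-verified Lean document; each statement's English description precedes it below -/
import Mathlib

section
/- Let ℓ(R, Φ) = ‖X − R T(Φ)‖_F² where T(Φ) ∈ ℝ^{((2+3d+d²)/2)×m} has columns ξ(τ_i) = (1, τ_iᵀ, ψ(τ_i)ᵀ)ᵀ for Φ = (τ₁,…,τ_m) ∈ ℝ^{d×m}, with ψ(τ) the vector of quadratic monomials of τ. Suppose Φ' = ZΦ + u 1_mᵀ for an invertible Z ∈ ℝ^{d×d} and u ∈ ℝ^d. Then for every R there exists R' with ℓ(R', Φ') = ℓ(R, Φ); in particular min_R ℓ(R, Φ') = min_R ℓ(R, Φ). -/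
open Matrix

/-- Index set of the `(d²+d)/2` monomials `τ_i τ_j`, `i ≤ j`. -/
abbrev QIdx (d : ℕ) := {p : Fin d × Fin d // p.1 ≤ p.2}

/-- The lifted feature vector `ξ(τ) = (1, τᵀ, ψ(τ)ᵀ)ᵀ`. -/
def xiFeat {d : ℕ} (τ : Fin d → ℝ) : Unit ⊕ Fin d ⊕ QIdx d → ℝ
  | Sum.inl _ => 1
  | Sum.inr (Sum.inl j) => τ j
  | Sum.inr (Sum.inr p) => τ p.1.1 * τ p.1.2

/-- The feature matrix `T(Φ)` with columns `ξ(τ_i)`. -/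
def TMat {d m : ℕ} (Φ : Matrix (Fin d) (Fin m) ℝ) :
    Matrix (Unit ⊕ Fin d ⊕ QIdx d) (Fin m) ℝ :=
  Matrix.of fun r i => xiFeat (fun j => Φ j i) r

open Finset in
lemma split_le {d : ℕ} (f : Fin d × Fin d → ℝ) :
    ∑ p ∈ Finset.univ.filter (fun p : Fin d × Fin d => p.1 ≤ p.2), f p
      = ∑ p ∈ Finset.univ.filter (fun p : Fin d × Fin d => p.1 < p.2), f p
        + ∑ k, f (k, k) := by
  classical
  rw [← Finset.sum_filter_add_sum_filter_not (Finset.univ.filter (fun p : Fin d × Fin d => p.1 ≤ p.2)) (fun p => p.1 < p.2)]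
  congr 1
  · apply Finset.sum_congr _ (fun _ _ => rfl)
    ext p
    simp only [Finset.mem_filter, Finset.mem_univ, true_and]
    constructor
    · exact fun h => h.2
    · exact fun h => ⟨le_of_lt h, h⟩
  · refine Finset.sum_nbij' (i := fun p => p.1) (j := fun k => (k, k)) ?_ ?_ ?_ ?_ ?_
    · intro p hp; simp
    · intro k hk; simp
    · intro p hp
      simp only [Finset.mem_filter, Finset.mem_univ, true_and] at hp
      have : p.1 = p.2 := le_antisymm hp.1 (not_lt.mp hp.2)
      exact Prod.ext rfl this
    · intro k hk; rfl
    · intro p hp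
      simp only [Finset.mem_filter, Finset.mem_univ, true_and] at hp
      have : p.1 = p.2 := le_antisymm hp.1 (not_lt.mp hp.2)
      rw [show p = (p.1, p.1) from Prod.ext rfl this.symm]

lemma swap_gt {d : ℕ} (f : Fin d × Fin d → ℝ) :
    ∑ p ∈ Finset.univ.filter (fun p : Fin d × Fin d => ¬ p.1 ≤ p.2), f p
      = ∑ p ∈ Finset.univ.filter (fun p : Fin d × Fin d => p.1 < p.2), f p.swap := by
  classical
  refine Finset.sum_nbij' (i := Prod.swap) (j := Prod.swap) ?_ ?_ ?_ ?_ ?_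
  · intro p hp; simp only [Finset.mem_filter, Finset.mem_univ, true_and, not_le] at hp ⊢
    exact hp
  · intro p hp; simp only [Finset.mem_filter, Finset.mem_univ, true_and, not_le] at hp ⊢
    exact hp
  · intro p _; exact Prod.swap_swap p
  · intro p _; exact Prod.swap_swap p
  · intro p _; rw [Prod.swap_swap]

lemma quad_sum {d : ℕ} (v w τ : Fin d → ℝ) :
    (∑ k, v k * τ k) * (∑ l, w l * τ l)
      = ∑ q : QIdx d,
          (if q.1.1 = q.1.2 then v q.1.1 * w q.1.1
           else v q.1.1 * w q.1.2 + v q.1.2 * w q.1.1) * (τ q.1.1 * τ q.1.2) := by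
  classical
  have hsub : (∑ q : QIdx d,
      (if q.1.1 = q.1.2 then v q.1.1 * w q.1.1
       else v q.1.1 * w q.1.2 + v q.1.2 * w q.1.1) * (τ q.1.1 * τ q.1.2))
      = ∑ p ∈ Finset.univ.filter (fun p : Fin d × Fin d => p.1 ≤ p.2),
          (if p.1 = p.2 then v p.1 * w p.1 else v p.1 * w p.2 + v p.2 * w p.1) * (τ p.1 * τ p.2) :=
    (Finset.sum_subtype (Finset.univ.filter (fun p : Fin d × Fin d => p.1 ≤ p.2)) (by simp)
      (fun p => (if p.1 = p.2 then v p.1 * w p.1 else v p.1 * w p.2 + v p.2 * w p.1) * (τ p.1 * τ p.2))).symm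
  rw [hsub, split_le]
  have lhs1 : (∑ k, v k * τ k) * (∑ l, w l * τ l)
      = ∑ p : Fin d × Fin d, (v p.1 * τ p.1) * (w p.2 * τ p.2) := by
    rw [Finset.sum_mul_sum]
    exact (Fintype.sum_prod_type (f := fun p : Fin d × Fin d => v p.1 * τ p.1 * (w p.2 * τ p.2))).symm
  rw [lhs1,
    ← Finset.sum_filter_add_sum_filter_not (Finset.univ : Finset (Fin d × Fin d)) (fun p => p.1 ≤ p.2),
    swap_gt, split_le]
  have hdiag : ∑ k : Fin d, (v (k,k).1 * τ (k,k).1) * (w (k,k).2 * τ (k,k).2)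
      = ∑ k : Fin d,
        (if (k, k).1 = (k, k).2 then v (k, k).1 * w (k, k).1 else v (k, k).1 * w (k, k).2 + v (k, k).2 * w (k, k).1)
          * (τ (k, k).1 * τ (k, k).2) := by
    apply Finset.sum_congr rfl; intro k _; simp; ring
  rw [hdiag, add_right_comm]
  congr 1
  rw [← Finset.sum_add_distrib]
  apply Finset.sum_congr rfl
  intro p hp
  simp only [Finset.mem_filter, Finset.mem_univ, true_and] at hp
  rw [if_neg (ne_of_lt hp)]
  simp [Prod.swap]
  ring

def AMat {d : ℕ} (Z : Matrix (Fin d) (Fin d) ℝ) (u : Fin d → ℝ) :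
    Matrix (Unit ⊕ Fin d ⊕ QIdx d) (Unit ⊕ Fin d ⊕ QIdx d) ℝ
  | Sum.inl _, Sum.inl _ => 1
  | Sum.inl _, Sum.inr _ => 0
  | Sum.inr (Sum.inl j), Sum.inl _ => u j
  | Sum.inr (Sum.inl j), Sum.inr (Sum.inl k) => Z j k
  | Sum.inr (Sum.inl _), Sum.inr (Sum.inr _) => 0
  | Sum.inr (Sum.inr p), Sum.inl _ => u p.1.1 * u p.1.2
  | Sum.inr (Sum.inr p), Sum.inr (Sum.inl k) => u p.1.1 * Z p.1.2 k + u p.1.2 * Z p.1.1 k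
  | Sum.inr (Sum.inr p), Sum.inr (Sum.inr q) =>
      if q.1.1 = q.1.2 then Z p.1.1 q.1.1 * Z p.1.2 q.1.1
      else Z p.1.1 q.1.1 * Z p.1.2 q.1.2 + Z p.1.1 q.1.2 * Z p.1.2 q.1.1

lemma transfer {d m : ℕ} (Z : Matrix (Fin d) (Fin d) ℝ) (u : Fin d → ℝ)
    (Φ : Matrix (Fin d) (Fin m) ℝ) :
    TMat (Z * Φ + Matrix.of fun j _ => u j) = AMat Z u * TMat Φ := by
  ext r i
  cases r with
  | inl _ =>
      simp [TMat, xiFeat, Matrix.mul_apply, Fintype.sum_sum_type, AMat]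
  | inr r =>
    cases r with
    | inl j =>
        simp [TMat, xiFeat, Matrix.mul_apply, Fintype.sum_sum_type, AMat,
          Matrix.add_apply, add_comm]
    | inr p =>
        have hq := quad_sum (fun k => Z p.1.1 k) (fun k => Z p.1.2 k) (fun j => Φ j i)
        simp only [TMat, xiFeat, Matrix.mul_apply, Fintype.sum_sum_type, AMat,
          Matrix.of_apply, Matrix.add_apply, Finset.univ_unique, Finset.sum_singleton]
        rw [← hq]
        simp [Matrix.mul_apply, add_mul, mul_add, Finset.sum_add_distrib,
          Finset.mul_sum, Finset.sum_mul]
        ring_nf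
        rw [show (∑ k, Z (p.1).1 k * Φ k i * u (p.1).2)
            = ∑ x, u (p.1).2 * Z (p.1).1 x * Φ x i from
          Finset.sum_congr rfl (fun x _ => by ring)]


/-- Proposition 1: if `Φ' = ZΦ + u1ᵀ` with `Z` invertible, then for every `R` there is `R'`
with `ℓ(R',Φ') = ℓ(R,Φ)`; in particular the minimal losses agree. -/
theorem stmt9 {D d m : ℕ} (X : Matrix (Fin D) (Fin m) ℝ)
    (Φ : Matrix (Fin d) (Fin m) ℝ) (Z : Matrix (Fin d) (Fin d) ℝ) (u : Fin d → ℝ)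
    (hZ : IsUnit Z.det)
    (Φ' : Matrix (Fin d) (Fin m) ℝ) (hΦ' : Φ' = Z * Φ + Matrix.of fun j _ => u j) :
    (∀ R : Matrix (Fin D) (Unit ⊕ Fin d ⊕ QIdx d) ℝ,
        ∃ R' : Matrix (Fin D) (Unit ⊕ Fin d ⊕ QIdx d) ℝ,
          ∑ i, ∑ j, ((X - R' * TMat Φ') i j) ^ 2 = ∑ i, ∑ j, ((X - R * TMat Φ) i j) ^ 2) ∧
      sInf {l : ℝ | ∃ R : Matrix (Fin D) (Unit ⊕ Fin d ⊕ QIdx d) ℝ,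
              l = ∑ i, ∑ j, ((X - R * TMat Φ') i j) ^ 2}
        = sInf {l : ℝ | ∃ R : Matrix (Fin D) (Unit ⊕ Fin d ⊕ QIdx d) ℝ,
              l = ∑ i, ∑ j, ((X - R * TMat Φ) i j) ^ 2} := by

  have hT' : TMat Φ' = AMat Z u * TMat Φ := by rw [hΦ']; exact transfer Z u Φ
  have hback : Φ = Z⁻¹ * Φ' + Matrix.of fun j _ => (-(Z⁻¹ *ᵥ u)) j := by
    rw [hΦ', Matrix.mul_add, ← Matrix.mul_assoc, Matrix.nonsing_inv_mul Z hZ, Matrix.one_mul]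
    ext j i
    simp [Matrix.mul_apply, Matrix.mulVec, dotProduct]
  have hT : TMat Φ = AMat Z⁻¹ (-(Z⁻¹ *ᵥ u)) * TMat Φ' := by
    conv_lhs => rw [hback]
    exact transfer _ _ _
  constructor
  · intro R
    refine ⟨R * AMat Z⁻¹ (-(Z⁻¹ *ᵥ u)), ?_⟩
    rw [Matrix.mul_assoc, ← hT]
  · refine congrArg sInf ?_
    ext l
    simp only [Set.mem_setOf_eq]
    constructor
    · rintro ⟨R, rfl⟩
      exact ⟨R * AMat Z u, by rw [Matrix.mul_assoc, ← hT']⟩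
    · rintro ⟨R, rfl⟩
      exact ⟨R * AMat Z⁻¹ (-(Z⁻¹ *ᵥ u)), by rw [Matrix.mul_assoc, ← hT]⟩
end

section
/- Let Φ ∈ ℝ^{d×m} satisfy ΦΦᵀ = I_d and Φ1_m = 0, and let T(Φ) = (1_m, Φᵀ, Ψ(Φ)ᵀ)ᵀ where Ψ(Φ) has columns ψ(τ_i), the quadratic monomial vectors of the columns τ_i of Φ. Let J = (0, I_{(d²+d)/2})ᵀ. Then for any λ > 0, the matrix T(Φ)T(Φ)ᵀ + λ J Jᵀ is positive definite. -/
open Matrix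

/-- The selector `J = (0, I)ᵀ` extracting the quadratic block. -/
def Jmat (d : ℕ) : Matrix (Unit ⊕ Fin d ⊕ QIdx d) (QIdx d) ℝ :=
  Matrix.of fun r q => match r with
    | Sum.inr (Sum.inr q') => if q' = q then (1 : ℝ) else 0
    | _ => 0

/-- Lemma 1: if `ΦΦᵀ = I`, `Φ1 = 0`, and `λ > 0`, then `T(Φ)T(Φ)ᵀ + λJJᵀ` is
positive definite. -/
theorem stmt12 {d m : ℕ} (hm : 0 < m) (Φ : Matrix (Fin d) (Fin m) ℝ)
    (hΦ : Φ * Φᵀ = 1) (hc : Φ.mulVec (fun _ => 1) = 0)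
    (lam : ℝ) (hlam : 0 < lam) :
    (TMat Φ * (TMat Φ)ᵀ + lam • (Jmat d * (Jmat d)ᵀ)).PosDef := by
  rw [posDef_iff_dotProduct_mulVec]
  constructor
  · unfold Matrix.IsHermitian
    ext r s
    simp only [conjTranspose_apply, Matrix.add_apply, Matrix.smul_apply, mul_apply, transpose_apply,
      star_trivial, smul_eq_mul]
    congr 1
    · exact Finset.sum_congr rfl fun i _ => mul_comm _ _
    · congr 1
      exact Finset.sum_congr rfl fun q _ => mul_comm _ _
  · intro x hx
    set w : Fin m → ℝ := x ᵥ* TMat Φ with hwdef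
    set u : QIdx d → ℝ := x ᵥ* Jmat d with hudef
    have key : star x ⬝ᵥ (TMat Φ * (TMat Φ)ᵀ + lam • (Jmat d * (Jmat d)ᵀ)) *ᵥ x
        = w ⬝ᵥ w + lam * (u ⬝ᵥ u) := by
      simp only [star_trivial, add_mulVec, dotProduct_add, smul_mulVec,
        dotProduct_smul, smul_eq_mul, ← mulVec_mulVec, dotProduct_mulVec, mulVec_transpose]
      rfl
    rw [key]
    have hwn : 0 ≤ w ⬝ᵥ w := Finset.sum_nonneg fun _ _ => mul_self_nonneg _
    have hun : 0 ≤ u ⬝ᵥ u := Finset.sum_nonneg fun _ _ => mul_self_nonneg _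
    rcases eq_or_ne w 0 with hw0 | hw0
    swap
    · have : 0 < w ⬝ᵥ w := lt_of_le_of_ne hwn (fun h => hw0 (dotProduct_self_eq_zero.mp h.symm))
      nlinarith
    rcases eq_or_ne u 0 with hu0 | hu0
    swap
    · have : 0 < u ⬝ᵥ u := lt_of_le_of_ne hun (fun h => hu0 (dotProduct_self_eq_zero.mp h.symm))
      nlinarith
    -- Both zero: derive x = 0, contradiction.
    exfalso
    apply hx
    -- quadratic block of x vanishes
    have hq : ∀ q : QIdx d, x (Sum.inr (Sum.inr q)) = 0 := by
      intro q
      have := congrFun hu0 q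
      simpa [hudef, Jmat, vecMul, dotProduct, Fintype.sum_sum_type] using this
    set a : ℝ := x (Sum.inl ()) with ha
    set b : Fin d → ℝ := fun j => x (Sum.inr (Sum.inl j)) with hb
    have hw : ∀ i : Fin m, a + ∑ j, Φ j i * b j = 0 := by
      intro i
      have := congrFun hw0 i
      simpa [hwdef, TMat, xiFeat, vecMul, dotProduct, Fintype.sum_sum_type, hq,
        mul_comm] using this
    -- b = 0
    have hb0 : ∀ k, b k = 0 := by
      intro k
      have h1 : ∑ i, Φ k i * (a + ∑ j, Φ j i * b j) = 0 := by
        simp only [hw, mul_zero, Finset.sum_const_zero]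
      have h2 : (∑ i, Φ k i * a) + ∑ i, Φ k i * ∑ j, Φ j i * b j = 0 := by
        rw [← Finset.sum_add_distrib]
        simpa [mul_add] using h1
      have h3 : (∑ i, Φ k i * a) = 0 := by
        have := congrFun hc k
        simp only [mulVec, dotProduct, Pi.zero_apply, mul_one] at this
        rw [← Finset.sum_mul, this, zero_mul]
      have h4 : ∑ i, Φ k i * ∑ j, Φ j i * b j = b k := by
        calc ∑ i, Φ k i * ∑ j, Φ j i * b j
            = ∑ i, ∑ j, Φ k i * Φ j i * b j := by
              simp_rw [Finset.mul_sum, mul_assoc]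
          _ = ∑ j, ∑ i, Φ k i * Φ j i * b j := Finset.sum_comm
          _ = ∑ j, (∑ i, Φ k i * Φ j i) * b j := by simp_rw [Finset.sum_mul]
          _ = ∑ j, (Φ * Φᵀ) k j * b j := by simp [Matrix.mul_apply]
          _ = b k := by
              rw [hΦ]
              simp [Matrix.one_apply, Finset.sum_ite_eq]
      rw [h3, zero_add, h4] at h2
      exact h2
    have ha0 : a = 0 := by
      have := hw ⟨0, hm⟩
      simpa [hb0] using this
    funext r
    match r with
    | Sum.inl () => exact ha0
    | Sum.inr (Sum.inl j) => exact hb0 j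
    | Sum.inr (Sum.inr q) => exact hq q
end

section
/- Fix X ∈ ℝ^{D×m}, T ∈ ℝ^{r×m}, and J ∈ ℝ^{r×s} such that M(λ) = TTᵀ + λJJᵀ is positive definite for all λ > 0. Define R̃(λ) = X Tᵀ M(λ)⁻¹ and s(λ) = ‖R̃(λ)J‖_F². Then s is differentiable on (0, ∞) with s'(λ) ≤ 0 and s''(λ) ≥ 0; i.e., s is nonincreasing and convex. -/
open Matrix

attribute [local instance] Matrix.linftyOpNormedRing Matrix.linftyOpNormedAlgebra

theorem hasDerivAt_inv_aux {n : ℕ} (A B : Matrix (Fin n) (Fin n) ℝ) {μ : ℝ}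
    (h : IsUnit (A + μ • B)) :
    HasDerivAt (fun t : ℝ => (A + t • B)⁻¹)
      (-((A + μ • B)⁻¹ * B * (A + μ • B)⁻¹)) μ := by
  obtain ⟨u, hu⟩ := h
  have hf : HasDerivAt (fun t : ℝ => A + t • B) B μ := by
    have h := ((hasDerivAt_id μ).smul_const B).const_add A
    simp only [id_eq, one_smul] at h
    exact h
  have hx : HasFDerivAt Ring.inverse
      (-(ContinuousLinearMap.mulLeftRight ℝ (Matrix (Fin n) (Fin n) ℝ)) ↑u⁻¹ ↑u⁻¹)
      (A + μ • B) := hu ▸ hasFDerivAt_ringInverse (𝕜 := ℝ) u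
  have hinv := hx.comp_hasDerivAt μ hf
  have hcoe : (↑u⁻¹ : Matrix (Fin n) (Fin n) ℝ) = (A + μ • B)⁻¹ := by
    rw [Matrix.nonsing_inv_eq_ringInverse, ← hu, Ring.inverse_unit]
  simp only [ContinuousLinearMap.neg_apply, ContinuousLinearMap.mulLeftRight_apply, hcoe] at hinv
  have heq : (fun t : ℝ => (A + t • B)⁻¹) = fun t => Ring.inverse (A + t • B) := by
    funext t; exact Matrix.nonsing_inv_eq_ringInverse _
  rw [heq]; exact hinv

theorem sum_quad_nonneg {d s : ℕ} (P : Matrix (Fin d) (Fin s) ℝ)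
    {Q : Matrix (Fin s) (Fin s) ℝ} (hQ : Q.PosSemidef) :
    0 ≤ ∑ i, ∑ q, P i q * (P * Q) i q := by
  apply Finset.sum_nonneg
  intro i _
  have h := hQ.dotProduct_mulVec_nonneg (P i)
  simp only [star_trivial] at h
  calc (0:ℝ) ≤ P i ⬝ᵥ (Q *ᵥ P i) := h
    _ = ∑ q, P i q * (P * Q) i q := by
        simp only [dotProduct, Matrix.mulVec, Matrix.mul_apply, dotProduct,
          Finset.mul_sum, Finset.sum_mul]
        rw [Finset.sum_comm]
        exact Finset.sum_congr rfl fun q _ => Finset.sum_congr rfl fun b _ => by ring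

set_option maxHeartbeats 1000000 in
/-- Proposition 2: with `M(λ) = TTᵀ + λJJᵀ` positive definite for `λ > 0`,
`R̃(λ) = XTᵀM(λ)⁻¹`, and `s(λ) = ‖R̃(λ)J‖_F²`, the function `s` is differentiable on
`(0,∞)` with `s'(λ) ≤ 0` and `s''(λ) ≥ 0`; i.e. `s` is nonincreasing and convex there. -/
theorem stmt15 {D m r s : ℕ} (X : Matrix (Fin D) (Fin m) ℝ) (T : Matrix (Fin r) (Fin m) ℝ)
    (J : Matrix (Fin r) (Fin s) ℝ)
    (hpd : ∀ lam : ℝ, 0 < lam → (T * Tᵀ + lam • (J * Jᵀ)).PosDef) :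
    (∀ lam : ℝ, 0 < lam → DifferentiableAt ℝ
        (fun μ : ℝ => ∑ i, ∑ q, ((X * Tᵀ * (T * Tᵀ + μ • (J * Jᵀ))⁻¹ * J) i q) ^ 2) lam) ∧
    (∀ lam : ℝ, 0 < lam → deriv
        (fun μ : ℝ => ∑ i, ∑ q, ((X * Tᵀ * (T * Tᵀ + μ • (J * Jᵀ))⁻¹ * J) i q) ^ 2) lam ≤ 0) ∧
    (∀ lam : ℝ, 0 < lam → 0 ≤ deriv (deriv
        (fun μ : ℝ => ∑ i, ∑ q, ((X * Tᵀ * (T * Tᵀ + μ • (J * Jᵀ))⁻¹ * J) i q) ^ 2)) lam) ∧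
    AntitoneOn
        (fun μ : ℝ => ∑ i, ∑ q, ((X * Tᵀ * (T * Tᵀ + μ • (J * Jᵀ))⁻¹ * J) i q) ^ 2)
        (Set.Ioi 0) ∧
    ConvexOn ℝ (Set.Ioi 0)
        (fun μ : ℝ => ∑ i, ∑ q, ((X * Tᵀ * (T * Tᵀ + μ • (J * Jᵀ))⁻¹ * J) i q) ^ 2) := by
  set A := T * Tᵀ with hA
  set B := J * Jᵀ with hB
  set C := X * Tᵀ with hC
  set g : ℝ → Matrix (Fin r) (Fin r) ℝ := fun t => (A + t • B)⁻¹ with hg_def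
  set φ : Fin D → Fin s → Matrix (Fin r) (Fin r) ℝ →L[ℝ] ℝ := fun i q =>
    LinearMap.toContinuousLinearMap
      { toFun := fun M => (C * M * J) i q
        map_add' := fun M N => by simp [Matrix.mul_add, Matrix.add_mul]
        map_smul' := fun c M => by simp [Matrix.mul_smul, Matrix.smul_mul] } with hφ_def
  set sfun : ℝ → ℝ :=
    (fun μ : ℝ => ∑ i, ∑ q, ((X * Tᵀ * (T * Tᵀ + μ • (J * Jᵀ))⁻¹ * J) i q) ^ 2) with hsfun
  have hφ_app : ∀ i q (M : Matrix (Fin r) (Fin r) ℝ), φ i q M = (C * M * J) i q := by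
    intro i q M; rfl
  have hsfun_eq : ∀ μ : ℝ, sfun μ = ∑ i, ∑ q, (φ i q (g μ)) ^ 2 := by
    intro μ; rfl
  -- derivative of g
  have hg : ∀ ⦃μ : ℝ⦄, 0 < μ → HasDerivAt g (-(g μ * B * g μ)) μ := fun μ hμ =>
    hasDerivAt_inv_aux A B (hpd μ hμ).isUnit
  -- first derivative function
  set D1 : ℝ → ℝ := fun μ => ∑ i, ∑ q,
      (-2 : ℝ) * (φ i q (g μ) * φ i q (g μ * B * g μ)) with hD1_def
  have hD1 : ∀ ⦃μ : ℝ⦄, 0 < μ → HasDerivAt sfun (D1 μ) μ := by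
    intro μ hμ
    have hterm : ∀ (i : Fin D) (q : Fin s), HasDerivAt (fun t => (φ i q (g t)) ^ 2)
        ((-2 : ℝ) * (φ i q (g μ) * φ i q (g μ * B * g μ))) μ := by
      intro i q
      have h1 := ((φ i q).hasFDerivAt.comp_hasDerivAt μ (hg hμ)).fun_pow 2
      refine h1.congr_deriv ?_
      simp only [map_neg, Function.comp_apply, pow_one, Nat.cast_ofNat]
      have hn : φ i q (-(g μ * B * g μ)) = -(φ i q (g μ * B * g μ)) := (φ i q).map_neg _
      change 2 * (φ i q (g μ)) ^ (2 - 1) * φ i q (-(g μ * B * g μ)) = _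
      rw [hn]
      ring
    have hfe : sfun = fun t => ∑ i, ∑ q, (φ i q (g t)) ^ 2 := funext hsfun_eq
    rw [hfe, hD1_def]
    exact HasDerivAt.fun_sum fun i _ => HasDerivAt.fun_sum fun q _ => hterm i q
  -- matrix identities
  have hPQ : ∀ μ : ℝ, C * (g μ * B * g μ) * J = (C * g μ * J) * (Jᵀ * g μ * J) := by
    intro μ; rw [hB]; simp only [Matrix.mul_assoc]
  have hW : ∀ μ : ℝ, C * (g μ * B * g μ * B * g μ) * J
      = ((C * g μ * J) * (Jᵀ * g μ * J)) * (Jᵀ * g μ * J) := by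
    intro μ; rw [hB]; simp only [Matrix.mul_assoc]
  have hQpsd : ∀ ⦃μ : ℝ⦄, 0 < μ → (Jᵀ * g μ * J).PosSemidef := by
    intro μ hμ
    have hpdg : (g μ).PosDef := (hpd μ hμ).inv
    have := hpdg.posSemidef.conjTranspose_mul_mul_same J
    rwa [conjTranspose_eq_transpose_of_trivial] at this
  -- sign of D1
  have hD1_nonpos : ∀ ⦃μ : ℝ⦄, 0 < μ → D1 μ ≤ 0 := by
    intro μ hμ
    set P := C * g μ * J
    set Q := Jᵀ * g μ * J
    have key : 0 ≤ ∑ i, ∑ q, P i q * (P * Q) i q := sum_quad_nonneg P (hQpsd hμ)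
    have : D1 μ = -2 * ∑ i, ∑ q, P i q * (P * Q) i q := by
      rw [hD1_def]
      simp only [Finset.mul_sum]
      refine Finset.sum_congr rfl fun i _ => Finset.sum_congr rfl fun q _ => ?_
      rw [hφ_app, hφ_app, hPQ μ]
      try ring
    rw [this]
    linarith
  -- second derivative
  set D2 : ℝ → ℝ := fun lam => ∑ i, ∑ q, (-2 : ℝ) *
      (φ i q (-(g lam * B * g lam)) * φ i q (g lam * B * g lam)
       + φ i q (g lam) * φ i q ((-(g lam * B * g lam) * B) * g lam
          + (g lam * B) * (-(g lam * B * g lam)))) with hD2_def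
  have hD2 : ∀ ⦃lam : ℝ⦄, 0 < lam → HasDerivAt D1 (D2 lam) lam := by
    intro lam hlam
    have hm : HasDerivAt (fun μ => g μ * B * g μ)
        ((-(g lam * B * g lam) * B) * g lam + (g lam * B) * (-(g lam * B * g lam))) lam :=
      ((hg hlam).mul_const B).mul (hg hlam)
    have hterm : ∀ (i : Fin D) (q : Fin s), HasDerivAt
        (fun t => (-2 : ℝ) * (φ i q (g t) * φ i q (g t * B * g t)))
        ((-2 : ℝ) * (φ i q (-(g lam * B * g lam)) * φ i q (g lam * B * g lam)
          + φ i q (g lam) * φ i q ((-(g lam * B * g lam) * B) * g lam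
            + (g lam * B) * (-(g lam * B * g lam))))) lam := by
      intro i q
      have h1 := (φ i q).hasFDerivAt.comp_hasDerivAt lam (hg hlam)
      have h2 := (φ i q).hasFDerivAt.comp_hasDerivAt lam hm
      exact (h1.mul h2).const_mul (-2 : ℝ)
    exact HasDerivAt.fun_sum (fun i _ => HasDerivAt.fun_sum (fun q _ => hterm i q))
  have hD2_nonneg : ∀ ⦃lam : ℝ⦄, 0 < lam → 0 ≤ D2 lam := by
    intro lam hlam
    set P := C * g lam * J with hP
    set Q := Jᵀ * g lam * J with hQ
    have hQQ : (Q * Q).PosSemidef := by simpa [pow_two] using (hQpsd hlam).pow 2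
    have key : 0 ≤ ∑ i, ∑ q, P i q * (P * (Q * Q)) i q := sum_quad_nonneg P hQQ
    have key2 : 0 ≤ ∑ i, ∑ q, ((P * Q) i q) ^ 2 :=
      Finset.sum_nonneg fun i _ => Finset.sum_nonneg fun q _ => sq_nonneg _
    have hE : D2 lam = 2 * (∑ i, ∑ q, ((P * Q) i q) ^ 2)
        + 4 * (∑ i, ∑ q, P i q * (P * (Q * Q)) i q) := by
      rw [hD2_def]
      simp only [Finset.mul_sum, ← Finset.sum_add_distrib]
      refine Finset.sum_congr rfl fun i _ => Finset.sum_congr rfl fun q _ => ?_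
      have e1 : φ i q (-(g lam * B * g lam)) = -((P * Q) i q) := by
        rw [map_neg, hφ_app, hPQ lam]
      have e2 : φ i q (g lam * B * g lam) = (P * Q) i q := by
        rw [hφ_app, hPQ lam]
      have e3 : φ i q ((-(g lam * B * g lam) * B) * g lam
          + (g lam * B) * (-(g lam * B * g lam))) = -2 * ((P * (Q * Q)) i q) := by
        have w1 : (-(g lam * B * g lam) * B) * g lam = -(g lam * B * g lam * B * g lam) := by
          noncomm_ring
        have w2 : (g lam * B) * (-(g lam * B * g lam)) = -(g lam * B * g lam * B * g lam) := by
          noncomm_ring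
        rw [w1, w2, map_add]
        simp only [map_neg]
        rw [hφ_app, hW lam]
        have hfold : C * g lam * J * (Jᵀ * g lam * J) * (Jᵀ * g lam * J) = P * (Q * Q) := by
          rw [hP, hQ, Matrix.mul_assoc]
        rw [hfold]
        ring
      have e4 : φ i q (g lam) = P i q := by rw [hφ_app, hP]
      rw [e1, e2, e3, e4]
      ring
    rw [hE]
    linarith
  -- eventual equality of deriv sfun with D1
  have hev : ∀ ⦃lam : ℝ⦄, 0 < lam → deriv sfun =ᶠ[nhds lam] D1 := by
    intro lam hlam
    filter_upwards [isOpen_Ioi.mem_nhds (show lam ∈ Set.Ioi (0:ℝ) from hlam)] with μ hμ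
    exact (hD1 hμ).deriv
  refine ⟨fun lam hlam => (hD1 hlam).differentiableAt,
    fun lam hlam => ?_, fun lam hlam => ?_, ?_, ?_⟩
  · rw [(hD1 hlam).deriv]; exact hD1_nonpos hlam
  · rw [(hev hlam).deriv_eq, (hD2 hlam).deriv]; exact hD2_nonneg hlam
  · refine antitoneOn_of_deriv_nonpos (convex_Ioi 0) ?_ ?_ ?_
    · exact fun x hx => ((hD1 hx).differentiableAt.continuousAt).continuousWithinAt
    · rw [interior_Ioi]
      exact fun x hx => (hD1 hx).differentiableAt.differentiableWithinAt
    · rw [interior_Ioi]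
      intro x hx
      rw [(hD1 hx).deriv]; exact hD1_nonpos hx
  · refine convexOn_of_deriv2_nonneg (convex_Ioi 0) ?_ ?_ ?_ ?_
    · exact fun x hx => ((hD1 hx).differentiableAt.continuousAt).continuousWithinAt
    · rw [interior_Ioi]
      exact fun x hx => (hD1 hx).differentiableAt.differentiableWithinAt
    · rw [interior_Ioi]
      intro x hx
      have : DifferentiableAt ℝ D1 x := (hD2 hx).differentiableAt
      exact (((hev hx).differentiableAt_iff).mpr this).differentiableWithinAt
    · rw [interior_Ioi]
      intro x hx
      have h2 : deriv^[2] sfun x = deriv (deriv sfun) x := by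
        simp [Function.iterate_succ, Function.comp_apply]
      rw [h2, (hev hx).deriv_eq, (hD2 hx).deriv]
      exact hD2_nonneg hx
end

section
/- Let M(λ) = M₀ + λ N where M₀ is symmetric positive semidefinite, N is symmetric positive semidefinite, and M(λ) is positive definite for all λ > 0. Then for any fixed vector w, the function λ ↦ ‖N^{1/2} M(λ)⁻¹ w‖² is nonincreasing on (0, ∞). -/
open Matrix

namespace Matrix.PosSemidef

open scoped ComplexOrder

/-- The positive semidefinite square root of a positive semidefinite matrix (as defined in
Mathlib of December 2024; since removed from Mathlib). -/
noncomputable def sqrt {𝕜 : Type*} [RCLike 𝕜] {n : Type*} [Fintype n] [DecidableEq n]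
    {A : Matrix n n 𝕜} (hA : A.PosSemidef) : Matrix n n 𝕜 :=
  hA.1.eigenvectorUnitary.1 * diagonal ((↑) ∘ (√·) ∘ hA.1.eigenvalues) *
    (star hA.1.eigenvectorUnitary : Matrix n n 𝕜)

lemma posSemidef_sqrt {𝕜 : Type*} [RCLike 𝕜] {n : Type*} [Fintype n] [DecidableEq n]
    {A : Matrix n n 𝕜} (hA : A.PosSemidef) : PosSemidef hA.sqrt := by
  unfold sqrt
  have := (posSemidef_diagonal_iff (d := ((↑) ∘ (√·) ∘ hA.1.eigenvalues : n → 𝕜))).mpr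
    (fun i => by
      rw [Function.comp_apply, RCLike.nonneg_iff]
      simp [Real.sqrt_nonneg])
  simpa [Matrix.star_eq_conjTranspose] using
    this.mul_mul_conjTranspose_same (hA.1.eigenvectorUnitary : Matrix n n 𝕜)

lemma sqrt_mul_self {𝕜 : Type*} [RCLike 𝕜] {n : Type*} [Fintype n] [DecidableEq n]
    {A : Matrix n n 𝕜} (hA : A.PosSemidef) : hA.sqrt * hA.sqrt = A := by
  let C : Matrix n n 𝕜 := hA.1.eigenvectorUnitary
  let E := diagonal ((↑) ∘ Real.sqrt ∘ hA.1.eigenvalues : n → 𝕜)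
  suffices C * (E * (star C * C) * E) * star C = A by
    rw [Matrix.PosSemidef.sqrt]
    simpa only [← mul_assoc] using this
  have : star C * C = 1 := by simp [C]
  rw [this, mul_one]
  have : E * E = diagonal ((↑) ∘ hA.1.eigenvalues) := by
    rw [diagonal_mul_diagonal]
    congr! with v
    simp [← pow_two, ← RCLike.ofReal_pow, Real.sq_sqrt (hA.eigenvalues_nonneg v)]
  rw [this]
  conv_rhs => rw [hA.1.spectral_theorem]
  rfl

end Matrix.PosSemidef

/-- Vector version of the monotonicity in Proposition 2: with `M(λ) = M₀ + λN`,
`M₀, N ⪰ 0`, `M(λ) ≻ 0` for `λ > 0`, the map `λ ↦ ‖N^{1/2} M(λ)⁻¹ w‖²` is nonincreasing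
on `(0, ∞)`. -/
theorem stmt16 {r : ℕ} (M₀ N : Matrix (Fin r) (Fin r) ℝ)
    (hM₀ : M₀.PosSemidef) (hN : N.PosSemidef)
    (hpd : ∀ lam : ℝ, 0 < lam → (M₀ + lam • N).PosDef) (w : Fin r → ℝ) :
    AntitoneOn (fun lam : ℝ =>
      (hN.sqrt.mulVec ((M₀ + lam • N)⁻¹.mulVec w)) ⬝ᵥ
        (hN.sqrt.mulVec ((M₀ + lam • N)⁻¹.mulVec w))) (Set.Ioi 0) := by
  -- reduce ‖√N v‖² to v ⬝ᵥ N v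
  have hNt : Nᵀ = N := hN.1
  have hSt : hN.sqrtᵀ = hN.sqrt := hN.posSemidef_sqrt.1
  have hsq : ∀ v : Fin r → ℝ, (hN.sqrt.mulVec v) ⬝ᵥ (hN.sqrt.mulVec v) = v ⬝ᵥ N.mulVec v := by
    intro v
    rw [dotProduct_mulVec, ← mulVec_transpose, hSt, mulVec_mulVec, hN.sqrt_mul_self]
    exact dotProduct_comm _ _
  intro a ha b hb hab
  simp only
  rw [hsq, hsq]
  set A := M₀ + a • N with hAdef
  set B := M₀ + b • N with hBdef
  have hA := hpd a ha
  have hB := hpd b hb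
  set x := A⁻¹.mulVec w with hx
  set y := B⁻¹.mulVec w with hy
  have hAinv : A * A⁻¹ = 1 := mul_nonsing_inv A (isUnit_iff_ne_zero.mpr hA.det_pos.ne')
  have hAinv' : A⁻¹ * A = 1 := nonsing_inv_mul A (isUnit_iff_ne_zero.mpr hA.det_pos.ne')
  have hBinv : B * B⁻¹ = 1 := mul_nonsing_inv B (isUnit_iff_ne_zero.mpr hB.det_pos.ne')
  have hAx : A.mulVec x = w := by rw [hx, mulVec_mulVec, hAinv, one_mulVec]
  have hBy : B.mulVec y = w := by rw [hy, mulVec_mulVec, hBinv, one_mulVec]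
  set t := b - a with ht
  have ht0 : 0 ≤ t := by simp [ht]; linarith
  have hBA : B = A + t • N := by
    rw [hAdef, hBdef, ht]; module
  set z := N.mulVec y with hz
  have hxy : x = y + t • A⁻¹.mulVec z := by
    have h1 : A.mulVec (x - y) = t • z := by
      have : A.mulVec x - A.mulVec y = B.mulVec y - A.mulVec y := by rw [hAx, hBy]
      rw [hBA] at this
      simp only [add_mulVec, smul_mulVec, add_sub_cancel_left] at this
      rw [← mulVec_sub] at this
      rw [← this, mulVec_sub]
    have h2 : A⁻¹.mulVec (A.mulVec (x - y)) = A⁻¹.mulVec (t • z) := by rw [h1]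
    rw [mulVec_mulVec, hAinv', one_mulVec, mulVec_smul] at h2
    have := sub_eq_iff_eq_add.mp h2
    rw [this]; abel
  -- symmetric dot product with N
  have hsymm : ∀ u v : Fin r → ℝ, u ⬝ᵥ N.mulVec v = (N.mulVec u) ⬝ᵥ v := by
    intro u v
    rw [dotProduct_mulVec, ← mulVec_transpose, hNt]
  have hAinvPSD : (A⁻¹).PosSemidef := hA.inv.posSemidef
  have key1 : 0 ≤ z ⬝ᵥ A⁻¹.mulVec z := by simpa using hAinvPSD.dotProduct_mulVec_nonneg z
  set d := t • A⁻¹.mulVec z with hd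
  have keyd : 0 ≤ d ⬝ᵥ N.mulVec d := by simpa using hN.dotProduct_mulVec_nonneg d
  have keyc : 0 ≤ y ⬝ᵥ N.mulVec d := by
    rw [hsymm, ← hz, hd, dotProduct_smul]
    exact mul_nonneg ht0 key1
  have keyc' : 0 ≤ d ⬝ᵥ N.mulVec y := by
    rw [hsymm, dotProduct_comm]; exact keyc
  rw [hxy]
  have expand : (y + d) ⬝ᵥ N.mulVec (y + d)
      = y ⬝ᵥ N.mulVec y + y ⬝ᵥ N.mulVec d + d ⬝ᵥ N.mulVec y + d ⬝ᵥ N.mulVec d := by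
    rw [mulVec_add, add_dotProduct, dotProduct_add, dotProduct_add]
    ring
  rw [expand]
  linarith
end
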